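/- (Lemma 5.) For all integers m ≥ 1 and n ≥ 1, the following identity holds in ℚ: Σ_{k=1}^{⌊n/(m+1)⌋} (1/k)·Σ_{d | gcd(n,k)} φ(d)·C((n − m·k)/d − 1, k/d − 1) = (1/n)·Σ_{d | n, d ≤ ⌊n/(m+1)⌋} φ(d)·( (m+1)·F^(m)_{n/d} − m·F^(m)_{n/d − 1} − 1 ). (Equivalently, each summand on the right may be written φ(d)·( F^(m)_{n/d} + m·F^(m)_{n/d − m − 1} − 1 ).) -/

import Mathlib

open Finset

/-- Two (0,1)-configurations on `ZMod n` are related if one is carried to the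
other by a rotation or a reflection. -/
def DihedralRel (n : ℕ) (c c' : ZMod n → Bool) : Prop :=
  (∃ t : ZMod n, (fun i => c (i + t)) = c') ∨ (∃ a : ZMod n, (fun i => c (a - i)) = c')

/-- The number of orbits of the dihedral action meeting the class `P`. -/
noncomputable def orbitCount (n : ℕ) (P : (ZMod n → Bool) → Prop) : ℕ :=
  Nat.card {q : Quot (DihedralRel n) // ∃ c, Quot.mk (DihedralRel n) c = q ∧ P c}

/-- The number of positions with value `true` in a configuration. -/
noncomputable def numOnes (n : ℕ) (c : ZMod n → Bool) : ℕ := Nat.card {i : ZMod n // c i = true}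

/-- A configuration is symmetric with respect to rotation if it has a nontrivial
rotational self-coincidence. -/
def RotSym (n : ℕ) (c : ZMod n → Bool) : Prop := ∃ t : ZMod n, t ≠ 0 ∧ ∀ i, c (i + t) = c i

/-- A configuration has a diameter of symmetry. -/
def DiamSym (n : ℕ) (c : ZMod n → Bool) : Prop := ∃ a : ZMod n, ∀ i, c (a - i) = c i

/-- A configuration has at least `m` 0's between any two adjacent 1's. -/
def Spaced (n m : ℕ) (c : ZMod n → Bool) : Prop :=
  ∀ i : ZMod n, c i = true → ∀ j : ℕ, 1 ≤ j → j ≤ m → c (i + (j : ZMod n)) = false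

/-- Gupta's expression `R(n,k)` from the Reis problem. -/
def ReisR (n k : ℕ) : ℚ :=
  (1/2) * ((Nat.choose ((n - k % 2) / 2) (k / 2) : ℚ) +
    (1/(k : ℚ)) * ∑ d ∈ (Nat.gcd n k).divisors,
      (Nat.totient d : ℚ) * (Nat.choose (n / d - 1) (k / d - 1) : ℚ))

/-- `m`-Fibonacci numbers of type 1. -/
def Fgen (m n : ℕ) : ℕ :=
  if _h : n ≤ m then 1 else Fgen m (n - 1) + Fgen m (n - m - 1)
termination_by n
decreasing_by all_goals omega

/-- `m`-Fibonacci numbers of type 2. -/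
def fgen (m n : ℕ) : ℕ :=
  if _h : n ≤ m then (if n ≤ (m - 1) / 2 then 1 else 2)
  else fgen m (n - 1) + fgen m (n - m - 1)
termination_by n
decreasing_by all_goals omega

lemma choose_van (m j N : ℕ) (hj : 1 ≤ j) (h : N < (m+1)*j) : (N - m*j).choose j = 0 := by
  apply Nat.choose_eq_zero_of_lt
  have h2 : (m+1)*j = m*j + j := by ring
  omega

lemma Fgen_eq_sum (m : ℕ) (hm : 1 ≤ m) : ∀ N, Fgen m N = ∑ j ∈ range (N+1), (N - m*j).choose j := by
  intro N
  induction N using Nat.strong_induction_on with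
  | _ N ih =>
    by_cases h : N ≤ m
    · rw [Fgen, dif_pos h, Finset.sum_eq_single 0]
      · simp
      · intro j hj hj0
        exact choose_van m j N (by omega) (by
          have : (m+1)*1 ≤ (m+1)*j := Nat.mul_le_mul_left _ (by omega)
          omega)
      · simp
    · push_neg at h
      rw [Fgen, dif_neg (by omega), ih (N-1) (by omega), ih (N-m-1) (by omega)]
      rw [Finset.sum_range_succ' (fun j => (N - m*j).choose j) N]
      have pascal : ∀ i, (N - m*(i+1)).choose (i+1)
          = ((N-1) - m*(i+1)).choose (i+1) + ((N-m-1) - m*i).choose i := by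
        intro i
        rcases Nat.lt_or_ge (m*(i+1)) N with hlt | hge
        · have ha : N - m*(i+1) = ((N-1) - m*(i+1)) + 1 := by omega
          have hb : (N-1) - m*(i+1) = (N-m-1) - m*i := by
            have : m*(i+1) = m*i + m := by ring
            omega
          rw [ha, Nat.choose_succ_succ', hb]; exact add_comm _ _
        · have h1 : N - m*(i+1) = 0 := by omega
          have hi : 1 ≤ i := by
            rcases Nat.eq_zero_or_pos i with rfl | h2
            · simp at hge; omega
            · exact h2
          have h2 : (N-1) - m*(i+1) = 0 := by omega
          have h3 : (N-m-1) - m*i = 0 := by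
            have : m*(i+1) = m*i + m := by ring
            omega
          rw [h1, h2, h3, Nat.choose_eq_zero_of_lt (by omega), Nat.choose_eq_zero_of_lt (by omega)]
      rw [Finset.sum_congr rfl (fun i _ => pascal i), Finset.sum_add_distrib]
      have e1 : ∑ i ∈ range N, ((N-1) - m*(i+1)).choose (i+1) + (N - m*0).choose 0
          = ∑ j ∈ range (N-1+1), ((N-1) - m*j).choose j := by
        rw [Finset.sum_range_succ' (fun j => ((N-1) - m*j).choose j) (N-1)]
        have hN : N = (N-1) + 1 := by omega
        rw [show range N = range ((N-1)+1) from by rw [← hN]]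
        rw [Finset.sum_range_succ]
        have : ((N-1) - m*((N-1)+1)).choose ((N-1)+1) = 0 := by
          apply choose_van m _ _ (by omega)
          have h2 : (m+1)*((N-1)+1) = m*((N-1)+1) + (N-1) + 1 := by ring
          omega
        simp [this]
      have e2 : ∑ i ∈ range N, ((N-m-1) - m*i).choose i
          = ∑ j ∈ range (N-m-1+1), ((N-m-1) - m*j).choose j := by
        symm
        apply Finset.sum_subset
        · intro x hx; simp at hx ⊢; omega
        · intro x hx hx2
          simp at hx hx2
          apply choose_van m _ _ (by omega)
          have h2 : (m+1)*x ≥ (m+1)*(N-m-1+1) := Nat.mul_le_mul_left _ (by omega)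
          have h3 : (m+1)*(N-m-1+1) = (m+1)*(N-m-1) + m + 1 := by ring
          have h4 : N-m-1 ≤ (m+1)*(N-m-1) := Nat.le_mul_of_pos_left _ (by omega)
          omega
      omega

lemma sum_B1 (m N : ℕ) (hm : 1 ≤ m) :
    1 + ∑ j ∈ Icc 1 (N/(m+1)), (N - m*j).choose j = Fgen m N := by
  rw [Fgen_eq_sum m hm N]
  have hins : range (N+1) = insert 0 (Icc 1 N) := by ext x; simp; omega
  rw [hins, Finset.sum_insert (by simp)]
  simp only [Nat.mul_zero, Nat.sub_zero, Nat.choose_zero_right]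
  congr 1
  apply Finset.sum_subset
  · intro x hx
    simp at hx ⊢
    exact ⟨hx.1, le_trans hx.2 (Nat.div_le_self _ _)⟩
  · intro x hx hx2
    simp at hx hx2
    apply choose_van m _ _ hx.1
    have := hx2 hx.1
    have h3 : N/(m+1) < x := by omega
    have := (Nat.div_lt_iff_lt_mul (by omega : 0 < m+1)).mp h3
    linarith [this]

lemma sum_B2 (m N : ℕ) (hm : 1 ≤ m) (hN : m+1 ≤ N) :
    ∑ j ∈ Icc 1 (N/(m+1)), (N - m*j - 1).choose (j-1) = Fgen m (N-m-1) := by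
  rw [Fgen_eq_sum m hm (N-m-1)]
  rw [← Finset.Ico_add_one_right_eq_Icc, Finset.sum_Ico_eq_sum_range]
  have hterm : ∀ i, (N - m*(1+i) - 1).choose (1+i-1) = ((N-m-1) - m*i).choose i := by
    intro i
    congr 1
    · have : m*(1+i) = m + m*i := by ring
      omega
    · omega
  rw [Finset.sum_congr rfl (fun i _ => hterm i)]
  apply Finset.sum_subset
  · intro x hx
    simp at hx ⊢
    -- x < N/(m+1)+1-1 = N/(m+1); need x < N-m-1+1 i.e. x ≤ N-m-1
    have hx' : x + 1 ≤ N/(m+1) := by omega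
    have h1 : (x+1)*(m+1) ≤ N := (Nat.le_div_iff_mul_le (by omega)).mp hx'
    have h2 : (x+1)*(m+1) = x*(m+1)+m+1 := by ring
    have h3 : x ≤ x*(m+1) := Nat.le_mul_of_pos_right _ (by omega)
    omega
  · intro x hx hx2
    simp at hx hx2
    have hK : 1 ≤ N/(m+1) := (Nat.le_div_iff_mul_le (by omega)).mpr (by omega)
    have hxK : N/(m+1) ≤ x := by omega
    have hx1 : 1 ≤ x := le_trans hK hxK
    apply choose_van m _ _ hx1
    have h3 : N/(m+1) < x + 1 := by omega
    have := (Nat.div_lt_iff_lt_mul (by omega : 0 < m+1)).mp h3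
    have h4 : (x+1)*(m+1) = (m+1)*x + m + 1 := by ring
    omega

lemma core (m N : ℕ) (hm : 1 ≤ m) (hN : 1 ≤ N) :
    ∑ j ∈ Icc 1 (N/(m+1)), (1/(j:ℚ)) * ((N - m*j - 1).choose (j-1) : ℚ)
      = (1/(N:ℚ)) * ((m+1) * (Fgen m N : ℚ) - m * (Fgen m (N-1) : ℚ) - 1) := by
  by_cases h : N ≤ m
  · rw [Nat.div_eq_of_lt (by omega), show Icc 1 0 = (∅ : Finset ℕ) from rfl]
    rw [show Fgen m N = 1 from by rw [Fgen]; exact dif_pos h,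
        show Fgen m (N-1) = 1 from by rw [Fgen]; exact dif_pos (by omega)]
    push_cast
    ring
  · push_neg at h
    have hrec : Fgen m N = Fgen m (N-1) + Fgen m (N-m-1) := by
      rw [Fgen]; exact dif_neg (by omega)
    have step1 : ∀ j ∈ Icc 1 (N/(m+1)), (1/(j:ℚ)) * ((N - m*j - 1).choose (j-1) : ℚ)
        = (1/(N:ℚ)) * (((N - m*j).choose j : ℚ) + m * ((N - m*j - 1).choose (j-1) : ℚ)) := by
      intro j hj
      simp at hj
      obtain ⟨hj1, hj2⟩ := hj
      have hjN : (m+1)*j ≤ N := by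
        have := (Nat.le_div_iff_mul_le (by omega : 0 < m+1)).mp hj2
        linarith
      have ha : 1 ≤ N - m*j := by
        have : (m+1)*j = m*j + j := by ring
        omega
      set a := N - m*j with ha_def
      have h1 : a * (a - 1).choose (j-1) = a.choose j * j := by
        have := Nat.add_one_mul_choose_eq (a - 1) (j-1)
        try rw [Nat.succ_eq_add_one, Nat.succ_eq_add_one] at this
        rw [show a - 1 + 1 = a from by omega, show j - 1 + 1 = j from by omega] at this
        exact this
      have h2 : (N:ℚ) = (a:ℚ) + m*j := by
        have h3 : N = a + m*j := by
          have : (m+1)*j = m*j + j := by ring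
          omega
        exact_mod_cast congrArg (fun x : ℕ => (x : ℚ)) h3
      have h1Q : (a:ℚ) * ((a - 1).choose (j-1) : ℚ) = (a.choose j : ℚ) * j := by
        exact_mod_cast congrArg (fun x : ℕ => (x : ℚ)) h1
      have hj0 : (j:ℚ) ≠ 0 := Nat.cast_ne_zero.mpr (by omega)
      have hN0 : (N:ℚ) ≠ 0 := Nat.cast_ne_zero.mpr (by omega)
      rw [one_div, one_div, inv_mul_eq_div, inv_mul_eq_div, div_eq_div_iff hj0 hN0]
      rw [h2]
      ring_nf
      nlinarith [h1Q]
    rw [Finset.sum_congr rfl step1, ← Finset.mul_sum, Finset.sum_add_distrib, ← Finset.mul_sum]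
    have hb1 : (∑ j ∈ Icc 1 (N/(m+1)), ((N - m*j).choose j : ℚ)) = (Fgen m N : ℚ) - 1 := by
      have := sum_B1 m N hm
      have := congrArg (fun x : ℕ => (x : ℚ)) this
      push_cast at this
      linarith
    have hb2 : (∑ j ∈ Icc 1 (N/(m+1)), ((N - m*j - 1).choose (j-1) : ℚ)) = (Fgen m (N-m-1) : ℚ) := by
      exact_mod_cast congrArg (fun x : ℕ => (x : ℚ)) (sum_B2 m N hm (by omega))
    rw [hb1, hb2]
    have hrecQ : (Fgen m N : ℚ) = (Fgen m (N-1) : ℚ) + (Fgen m (N-m-1) : ℚ) := by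
      exact_mod_cast congrArg (fun x : ℕ => (x : ℚ)) hrec
    have hN0 : (N:ℚ) ≠ 0 := Nat.cast_ne_zero.mpr (by omega)
    linear_combination (-(m:ℚ)/(N:ℚ)) * hrecQ


/-- Lemma 5. -/
theorem lemma5 (m n : ℕ) (hm : 1 ≤ m) (hn : 1 ≤ n) :
    (∑ k ∈ Finset.Icc 1 (n / (m + 1)), (1 / (k : ℚ)) *
        ∑ d ∈ (Nat.gcd n k).divisors,
          (Nat.totient d : ℚ) * (Nat.choose ((n - m * k) / d - 1) (k / d - 1) : ℚ)) =
      (1 / (n : ℚ)) * ∑ d ∈ n.divisors.filter (fun d => d ≤ n / (m + 1)),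
        (Nat.totient d : ℚ) *
          ((m + 1) * (Fgen m (n / d) : ℚ) - m * (Fgen m (n / d - 1) : ℚ) - 1) := by
  have hdiv : ∀ k ∈ Icc 1 (n/(m+1)), (Nat.gcd n k).divisors = n.divisors.filter (· ∣ k) := by
    intro k hk
    ext d
    simp only [Nat.mem_divisors, Finset.mem_filter, Nat.dvd_gcd_iff, Nat.gcd_eq_zero_iff]
    constructor
    · rintro ⟨⟨h1, h2⟩, _⟩
      refine ⟨⟨h1, ?_⟩, h2⟩
      omega
    · rintro ⟨⟨h1, _⟩, h3⟩
      refine ⟨⟨h1, h3⟩, ?_⟩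
      rw [Ne, Nat.gcd_eq_zero_iff]
      omega
  calc (∑ k ∈ Finset.Icc 1 (n / (m + 1)), (1 / (k : ℚ)) *
        ∑ d ∈ (Nat.gcd n k).divisors,
          (Nat.totient d : ℚ) * (Nat.choose ((n - m * k) / d - 1) (k / d - 1) : ℚ))
      = ∑ k ∈ Finset.Icc 1 (n / (m + 1)), ∑ d ∈ n.divisors.filter (· ∣ k),
          (1 / (k : ℚ)) * ((Nat.totient d : ℚ) * (Nat.choose ((n - m * k) / d - 1) (k / d - 1) : ℚ)) := by
        refine Finset.sum_congr rfl fun k hk => ?_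
        rw [hdiv k hk, Finset.mul_sum]
    _ = ∑ d ∈ n.divisors, ∑ k ∈ (Finset.Icc 1 (n/(m+1))).filter (d ∣ ·),
          (1 / (k : ℚ)) * ((Nat.totient d : ℚ) * (Nat.choose ((n - m * k) / d - 1) (k / d - 1) : ℚ)) := by
        apply Finset.sum_comm'
        intro k d
        simp only [Finset.mem_filter]
        tauto
    _ = ∑ d ∈ n.divisors, (1/(n:ℚ)) * ((Nat.totient d : ℚ) *
          ((m + 1) * (Fgen m (n / d) : ℚ) - m * (Fgen m (n / d - 1) : ℚ) - 1)) := by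
        refine Finset.sum_congr rfl fun d hd => ?_
        rw [Nat.mem_divisors] at hd
        obtain ⟨hdn, _⟩ := hd
        have hd0 : 0 < d := Nat.pos_of_dvd_of_pos hdn (by omega)
        set N := n / d with hNdef
        have hdN : d * N = n := Nat.mul_div_cancel' hdn
        have hN1 : 1 ≤ N := Nat.one_le_div_iff hd0 |>.mpr (Nat.le_of_dvd (by omega) hdn)
        have himg : (Finset.Icc 1 (n/(m+1))).filter (d ∣ ·)
            = (Finset.Icc 1 (N/(m+1))).image (fun j => d*j) := by
          ext k
          simp only [Finset.mem_filter, Finset.mem_image, Finset.mem_Icc]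
          have hbnd : ∀ j : ℕ, d*j ≤ n/(m+1) ↔ j ≤ N/(m+1) := by
            intro j
            rw [Nat.le_div_iff_mul_le (show 0 < m+1 by omega),
              show N/(m+1) = n/(d*(m+1)) from by rw [hNdef, Nat.div_div_eq_div_mul],
              Nat.le_div_iff_mul_le (by positivity),
              show j*(d*(m+1)) = d*j*(m+1) from by ring]
          constructor
          · rintro ⟨⟨hk1, hk2⟩, c, rfl⟩
            have hc : 1 ≤ c := by
              rcases Nat.eq_zero_or_pos c with rfl | h
              · simp at hk1
              · exact h
            exact ⟨c, ⟨hc, (hbnd c).mp hk2⟩, rfl⟩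
          · rintro ⟨j, ⟨hj1, hj2⟩, rfl⟩
            exact ⟨⟨Nat.mul_pos hd0 hj1, (hbnd j).mpr hj2⟩, dvd_mul_right d j⟩
        rw [himg, Finset.sum_image (fun x _ y _ h => Nat.eq_of_mul_eq_mul_left hd0 h)]
        have hterm : ∀ j ∈ Finset.Icc 1 (N/(m+1)),
            (1 / ((d*j : ℕ) : ℚ)) * ((Nat.totient d : ℚ) *
              (Nat.choose ((n - m * (d*j)) / d - 1) ((d*j) / d - 1) : ℚ))
            = ((Nat.totient d : ℚ)/d) * ((1/(j:ℚ)) * ((N - m*j - 1).choose (j-1) : ℚ)) := by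
          intro j hj
          simp only [Finset.mem_Icc] at hj
          have e1 : (d*j)/d = j := Nat.mul_div_cancel_left j hd0
          have e2 : (n - m*(d*j))/d = N - m*j := by
            rw [show m*(d*j) = d*(m*j) from by ring, ← hdN, ← Nat.mul_sub,
              Nat.mul_div_cancel_left _ hd0]
          rw [e1, e2]
          have hj0 : (j:ℚ) ≠ 0 := Nat.cast_ne_zero.mpr (by omega)
          have hd0' : (d:ℚ) ≠ 0 := Nat.cast_ne_zero.mpr (by omega)
          push_cast
          field_simp
        rw [Finset.sum_congr rfl hterm, ← Finset.mul_sum, core m N hm hN1]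
        have hn0 : (n:ℚ) ≠ 0 := Nat.cast_ne_zero.mpr (by omega)
        have hd0' : (d:ℚ) ≠ 0 := Nat.cast_ne_zero.mpr (by omega)
        have hN0 : (N:ℚ) ≠ 0 := Nat.cast_ne_zero.mpr (by omega)
        have hdNQ : (d:ℚ) * (N:ℚ) = (n:ℚ) := by exact_mod_cast congrArg (fun x : ℕ => (x:ℚ)) hdN
        have h1n : (1/(n:ℚ)) = (1/(d:ℚ))*(1/(N:ℚ)) := by
          rw [← hdNQ]
          rw [one_div, one_div, one_div, mul_inv]
        rw [h1n]
        ring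
    _ = (1 / (n : ℚ)) * ∑ d ∈ n.divisors.filter (fun d => d ≤ n / (m + 1)),
        (Nat.totient d : ℚ) *
          ((m + 1) * (Fgen m (n / d) : ℚ) - m * (Fgen m (n / d - 1) : ℚ) - 1) := by
        rw [Finset.mul_sum, Finset.sum_filter]
        refine Finset.sum_congr rfl fun d hd => ?_
        rw [Nat.mem_divisors] at hd
        obtain ⟨hdn, _⟩ := hd
        have hd0 : 0 < d := Nat.pos_of_dvd_of_pos hdn (by omega)
        by_cases hle : d ≤ n/(m+1)
        · rw [if_pos hle]
        · rw [if_neg hle]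
          have h1 : ¬ (d*(m+1) ≤ n) := fun h => hle ((Nat.le_div_iff_mul_le (by omega)).mpr h)
          have hdN : d * (n/d) = n := Nat.mul_div_cancel' hdn
          have hNm : n/d ≤ m := by
            by_contra h2
            push_neg at h2
            exact h1 (by calc d*(m+1) ≤ d*(n/d) := Nat.mul_le_mul_left _ h2
              _ = n := hdN)
          have hN1 : 1 ≤ n/d := Nat.one_le_div_iff hd0 |>.mpr (Nat.le_of_dvd (by omega) hdn)
          rw [show Fgen m (n/d) = 1 from by rw [Fgen]; exact dif_pos hNm,
            show Fgen m (n/d - 1) = 1 from by rw [Fgen]; exact dif_pos (by omega)]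
          push_cast
          ring
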